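/- Let f be a nonnegative integrable function on a σ-finite measure space (X, μ). Then the decreasing rearrangement f↓ of f is equimeasurable with f: for every measurable function φ: ℝ≥0 → ℝ≥0 with φ(0) = 0, the integral of φ ∘ f over X with respect to μ equals the integral of φ ∘ f↓ over ℝ≥0 with respect to Lebesgue measure. -/

import Mathlib

open MeasureTheory Set
open scoped ENNReal

/-- The distribution function `D_f(t) = μ{x : f x > t}`. -/
noncomputable def distFun {X : Type*} [MeasurableSpace X] (μ : Measure X)
    (f : X → ℝ≥0∞) (t : ℝ≥0∞) : ℝ≥0∞ := μ {x | t < f x}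

/-- The decreasing rearrangement `f↓(r) = inf {t > 0 : D_f(t) ≤ r}`. -/
noncomputable def decRearr {X : Type*} [MeasurableSpace X] (μ : Measure X)
    (f : X → ℝ≥0∞) (r : ℝ) : ℝ≥0∞ :=
  sInf {t : ℝ≥0∞ | 0 < t ∧ distFun μ f t ≤ ENNReal.ofReal r}

section Aux

variable {X : Type*} [MeasurableSpace X] (μ : Measure X) (f : X → ℝ≥0∞)

lemma distFun_antitone : Antitone (distFun μ f) := fun _ _ hab =>
  measure_mono fun _ hx => lt_of_le_of_lt hab hx

lemma decRearr_antitone : Antitone (decRearr μ f) := fun _ _ hab =>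
  sInf_le_sInf fun t ht => ⟨ht.1, ht.2.trans (ENNReal.ofReal_le_ofReal hab)⟩

lemma decRearr_measurable : Measurable (decRearr μ f) :=
  (decRearr_antitone μ f).measurable

lemma distFun_le_of_decRearr_le {t : ℝ≥0∞} {r : ℝ}
    (h : decRearr μ f r ≤ t) : distFun μ f t ≤ ENNReal.ofReal r := by
  set c := ENNReal.ofReal r with hc
  rcases eq_or_ne t ∞ with rfl | htop
  · have he : {x | (∞ : ℝ≥0∞) < f x} = ∅ := by ext x; simp
    simp [distFun, he]
  · have hx : ∀ n : ℕ, ∃ s, (0 < s ∧ distFun μ f s ≤ c) ∧ s < t + (n : ℝ≥0∞)⁻¹ := by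
      intro n
      have hlt : sInf {s : ℝ≥0∞ | 0 < s ∧ distFun μ f s ≤ c} < t + (n : ℝ≥0∞)⁻¹ :=
        lt_of_le_of_lt h (ENNReal.lt_add_right htop (by simp))
      simpa using sInf_lt_iff.mp hlt
    choose a ha hlt using hx
    have hsub : {x | t < f x} ⊆ ⋃ n, {x | a n < f x} := by
      intro x hx
      have hxt : t < f x := hx
      have hne : f x - t ≠ 0 := by
        simpa [tsub_eq_zero_iff_le] using not_le.mpr hxt
      obtain ⟨n, hn⟩ := ENNReal.exists_inv_nat_lt hne
      refine mem_iUnion.mpr ⟨n, ?_⟩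
      have h2 : t + (n : ℝ≥0∞)⁻¹ < t + (f x - t) := ENNReal.add_lt_add_left htop hn
      rw [add_tsub_cancel_of_le hxt.le] at h2
      exact (hlt n).trans h2
    have hdir : Directed (· ⊆ ·) (fun n : ℕ => {x | a n < f x}) := by
      intro m n
      rcases le_total (a m) (a n) with h' | h'
      · exact ⟨m, Subset.rfl, fun x hx => lt_of_le_of_lt h' hx⟩
      · exact ⟨n, fun x hx => lt_of_le_of_lt h' hx, Subset.rfl⟩
    calc distFun μ f t ≤ μ (⋃ n, {x | a n < f x}) := measure_mono hsub
      _ = ⨆ n, μ {x | a n < f x} := hdir.measure_iUnion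
      _ ≤ c := iSup_le fun n => (ha n).2

lemma decRearr_le_of_distFun_le {t : ℝ≥0∞} {r : ℝ}
    (h : distFun μ f t ≤ ENNReal.ofReal r) : decRearr μ f r ≤ t := by
  rcases eq_or_ne t 0 with rfl | ht
  · by_contra h'
    push_neg at h'
    obtain ⟨ε, hε0, hεlt⟩ := exists_between h'
    have : decRearr μ f r ≤ ε :=
      sInf_le ⟨hε0, le_trans (distFun_antitone μ f (zero_le : (0:ℝ≥0∞) ≤ ε)) h⟩
    exact absurd this (not_le.mpr hεlt)
  · exact sInf_le ⟨zero_lt_iff.mpr ht, h⟩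

lemma lt_decRearr_iff (t : ℝ≥0∞) (r : ℝ) :
    t < decRearr μ f r ↔ ENNReal.ofReal r < distFun μ f t := by
  constructor
  · intro h
    by_contra h'
    push_neg at h'
    exact absurd (decRearr_le_of_distFun_le μ f h') (not_le.mpr h)
  · intro h
    by_contra h'
    push_neg at h'
    exact absurd (distFun_le_of_decRearr_le μ f h') (not_le.mpr h)

/-- The pushforward of Lebesgue measure on `(0,∞)` under the rearrangement has the same
distribution function. -/
lemma meas_lt_decRearr (t : ℝ≥0∞) :
    (volume.restrict (Set.Ioi (0:ℝ))).map (decRearr μ f) (Set.Ioi t) = distFun μ f t := by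
  rw [Measure.map_apply (decRearr_measurable μ f) measurableSet_Ioi,
    Measure.restrict_apply' measurableSet_Ioi]
  rcases eq_or_ne (distFun μ f t) ∞ with hD | hD
  · have : decRearr μ f ⁻¹' Set.Ioi t ∩ Set.Ioi 0 = Set.Ioi (0:ℝ) := by
      ext r
      simp only [mem_inter_iff, mem_preimage, mem_Ioi, and_iff_right_iff_imp,
        lt_decRearr_iff]
      intro _
      rw [hD]
      exact ENNReal.ofReal_lt_top
    rw [this, Real.volume_Ioi, hD]
  · have : decRearr μ f ⁻¹' Set.Ioi t ∩ Set.Ioi 0 = Set.Ioo 0 (distFun μ f t).toReal := by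
      ext r
      simp only [mem_inter_iff, mem_preimage, mem_Ioi, mem_Ioo, lt_decRearr_iff]
      constructor
      · rintro ⟨h1, h2⟩
        exact ⟨h2, (ENNReal.ofReal_lt_iff_lt_toReal h2.le hD).mp h1⟩
      · rintro ⟨h1, h2⟩
        exact ⟨(ENNReal.ofReal_lt_iff_lt_toReal h1.le hD).mpr h2, h1⟩
    rw [this, Real.volume_Ioo, ENNReal.ofReal_sub _ (by norm_num), ENNReal.ofReal_zero,
      tsub_zero, ENNReal.ofReal_toReal hD]

end Aux

/-- Equimeasurability of a nonnegative integrable function with its decreasing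
rearrangement: for every measurable `φ` with `φ 0 = 0`, the integral of `φ ∘ f` over `X`
equals the integral of `φ ∘ f↓` over `ℝ≥0` with respect to Lebesgue measure. -/
theorem stmt0 {X : Type*} [MeasurableSpace X] (μ : Measure X) [SigmaFinite μ]
    (f : X → ℝ≥0∞) (hf : Measurable f) (hint : ∫⁻ x, f x ∂μ ≠ ∞)
    (φ : ℝ≥0∞ → ℝ≥0∞) (hφ : Measurable φ) (hφ0 : φ 0 = 0) :
    ∫⁻ x, φ (f x) ∂μ = ∫⁻ r in Set.Ioi (0 : ℝ), φ (decRearr μ f r) := by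
  set ν₁ : Measure ℝ≥0∞ := μ.map f with hν₁
  set ν₂ : Measure ℝ≥0∞ := (volume.restrict (Set.Ioi (0:ℝ))).map (decRearr μ f) with hν₂
  have h1 : ∀ t : ℝ≥0∞, ν₁ (Set.Ioi t) = distFun μ f t := by
    intro t
    rw [hν₁, Measure.map_apply hf measurableSet_Ioi]
    rfl
  have h2 : ∀ t : ℝ≥0∞, ν₂ (Set.Ioi t) = distFun μ f t := fun t => meas_lt_decRearr μ f t
  -- distribution function is finite for positive arguments
  have hfin : ∀ t : ℝ≥0∞, t ≠ 0 → distFun μ f t ≠ ∞ := by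
    intro t ht
    rcases eq_or_ne t ∞ with rfl | htop
    · have he : {x | (∞ : ℝ≥0∞) < f x} = ∅ := by ext x; simp
      simp [distFun, he]
    · have hle : distFun μ f t ≤ μ {x | t ≤ f x} :=
        measure_mono fun x (hx : t < f x) => hx.le
      have hml : t * μ {x | t ≤ f x} ≤ ∫⁻ x, f x ∂μ := mul_meas_ge_le_lintegral hf t
      intro hcon
      rw [eq_top_iff.mpr (hcon ▸ hle : (∞:ℝ≥0∞) ≤ μ {x | t ≤ f x})] at hml
      rw [ENNReal.mul_top ht] at hml
      exact hint (top_le_iff.mp hml)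
  -- the restrictions of the two measures to `Ioi ε` agree for `ε = (n : ℝ≥0∞)⁻¹`
  have hres : ∀ n : ℕ, ν₁.restrict (Set.Ioi ((n : ℝ≥0∞)⁻¹)) =
      ν₂.restrict (Set.Ioi ((n : ℝ≥0∞)⁻¹)) := by
    intro n
    set ε : ℝ≥0∞ := (n : ℝ≥0∞)⁻¹ with hε
    have hεne : ε ≠ 0 := by simp [hε]
    haveI : IsFiniteMeasure (ν₁.restrict (Set.Ioi ε)) := by
      constructor
      rw [Measure.restrict_apply_univ, h1]
      exact lt_top_iff_ne_top.mpr (hfin ε hεne)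
    refine ext_of_generate_finite (Set.range Set.Ioi)
      (BorelSpace.measurable_eq.trans (borel_eq_generateFrom_Ioi ℝ≥0∞)) ?_ ?_ ?_
    · rintro _ ⟨a, rfl⟩ _ ⟨b, rfl⟩ -
      exact ⟨a ⊔ b, (Set.Ioi_inter_Ioi).symm⟩
    · rintro _ ⟨a, rfl⟩
      rw [Measure.restrict_apply measurableSet_Ioi,
        Measure.restrict_apply measurableSet_Ioi, Set.Ioi_inter_Ioi, h1, h2]
    · rw [Measure.restrict_apply_univ, Measure.restrict_apply_univ, h1, h2]
  -- hence the restrictions to `Ioi 0` agree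
  have hIoi0 : Set.Ioi (0:ℝ≥0∞) = ⋃ n : ℕ, Set.Ioi ((n : ℝ≥0∞)⁻¹) := by
    ext x
    simp only [mem_Ioi, mem_iUnion]
    constructor
    · intro hx
      exact ENNReal.exists_inv_nat_lt hx.ne'
    · rintro ⟨n, hn⟩
      exact lt_of_le_of_lt zero_le hn
  have hmono : Monotone (fun n : ℕ => Set.Ioi ((n : ℝ≥0∞)⁻¹)) := by
    intro m n hmn
    exact Set.Ioi_subset_Ioi (ENNReal.inv_le_inv.mpr (by exact_mod_cast hmn))
  have hres0 : ν₁.restrict (Set.Ioi (0:ℝ≥0∞)) = ν₂.restrict (Set.Ioi (0:ℝ≥0∞)) := by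
    refine Measure.ext fun s hs => ?_
    rw [Measure.restrict_apply hs, Measure.restrict_apply hs, hIoi0, Set.inter_iUnion]
    have hd : Directed (· ⊆ ·) (fun n : ℕ => s ∩ Set.Ioi ((n : ℝ≥0∞)⁻¹)) :=
      (Monotone.directed_le fun m n hmn => Set.inter_subset_inter_right s (hmono hmn))
    rw [hd.measure_iUnion, hd.measure_iUnion]
    congr 1
    ext n
    have := congrArg (fun m : Measure ℝ≥0∞ => m s) (hres n)
    simpa [Measure.restrict_apply hs] using this
  -- finish: split each integral at `0`
  have hcompl : ({0} : Set ℝ≥0∞)ᶜ = Set.Ioi 0 := by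
    ext x
    simp [pos_iff_ne_zero]
  have key : ∀ ν : Measure ℝ≥0∞, ∫⁻ y, φ y ∂ν = ∫⁻ y in Set.Ioi (0:ℝ≥0∞), φ y ∂ν := by
    intro ν
    rw [← lintegral_add_compl φ (measurableSet_singleton (0:ℝ≥0∞)), hcompl,
      lintegral_singleton, hφ0, zero_mul, zero_add]
  calc ∫⁻ x, φ (f x) ∂μ = ∫⁻ y, φ y ∂ν₁ := (lintegral_map hφ hf).symm
    _ = ∫⁻ y in Set.Ioi (0:ℝ≥0∞), φ y ∂ν₁ := key ν₁
    _ = ∫⁻ y in Set.Ioi (0:ℝ≥0∞), φ y ∂ν₂ := by rw [show ν₁.restrict _ = _ from hres0]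
    _ = ∫⁻ y, φ y ∂ν₂ := (key ν₂).symm
    _ = ∫⁻ r in Set.Ioi (0 : ℝ), φ (decRearr μ f r) :=
        lintegral_map hφ (decRearr_measurable μ f)
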